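/- Define f : ℝ → ℝ by f(s) = s·((15/8) − (5/4)s + (3/8)s²)². Then f(1) = 1, f'(1) = 0, f''(1) = 0, and the fixed point 1 is attracting with attraction region containing (0, 7/3): for every s₀ ∈ (0, 7/3), the iteration s_{k+1} = f(s_k) converges to 1. -/

import Mathlib

/-- The spectral map of the cubically convergent tight-window iteration III
with initial scaling: `f(s) = s·(φ₃ᵗ(s))²` with `φ₃ᵗ(s) = 15/8 − (5/4)s + (3/8)s²`. -/
noncomputable def f4 (s : ℝ) : ℝ := s * ((15/8) - (5/4) * s + (3/8) * s ^ 2) ^ 2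

lemma f4_cont : Continuous f4 := by
  unfold f4; continuity

lemma f4_lt_one {s : ℝ} (h0 : 0 < s) (h1 : s < 1) : s < f4 s ∧ f4 s < 1 := by
  unfold f4
  constructor
  · nlinarith [sq_nonneg s, sq_nonneg (s-1), sq_nonneg (s*(s-1)), mul_pos h0 (mul_pos (sub_pos.2 h1) (sub_pos.2 h1))]
  · nlinarith [sq_nonneg s, sq_nonneg (s-1), mul_pos (sub_pos.2 h1) (mul_pos (sub_pos.2 h1) (sub_pos.2 h1))]

lemma f4_gt_one {s : ℝ} (h0 : 1 < s) (h1 : s < 7/3) : 1 < f4 s ∧ f4 s < s := by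
  unfold f4
  constructor
  · nlinarith [sq_nonneg s, sq_nonneg (s-1), mul_pos (sub_pos.2 h0) (mul_pos (sub_pos.2 h0) (sub_pos.2 h0))]
  · nlinarith [mul_pos (mul_pos (show (0:ℝ)<s by linarith) (sub_pos.2 h0)) (show (0:ℝ)<7/3-s by linarith), sq_nonneg (s-1), sq_nonneg (s*(s-1)), sq_nonneg ((s-1)*(s-5/3)), sq_nonneg (s-5/3)]

theorem stmt4 :
    f4 1 = 1 ∧ deriv f4 1 = 0 ∧ deriv (deriv f4) 1 = 0 ∧
    (∀ s₀ ∈ Set.Ioo (0 : ℝ) (7/3),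
      Filter.Tendsto (fun k => f4^[k] s₀) Filter.atTop (nhds 1)) := by
  have hq : ∀ s : ℝ, HasDerivAt (fun s : ℝ => (15/8) - (5/4) * s + (3/8) * s ^ 2)
      (-(5/4) + (3/8) * (2 * s)) s := by
    intro s
    have h1 : HasDerivAt (fun s : ℝ => (15/8) - (5/4) * s) (0 - 5/4 * 1) s :=
      (hasDerivAt_const s (15/8:ℝ)).sub ((hasDerivAt_id s).const_mul (5/4))
    have h2 : HasDerivAt (fun s : ℝ => (3/8) * s ^ 2) ((3/8) * (2 * s ^ 1)) s :=
      (hasDerivAt_pow 2 s).const_mul (3/8)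
    have := h1.add h2
    exact this.congr_deriv (by ring)
  have hder : ∀ s : ℝ, HasDerivAt f4
      ((45*s^4 - 240*s^3 + 570*s^2 - 600*s + 225)/64) s := by
    intro s
    have h := (hasDerivAt_id s).mul ((hq s).pow 2)
    simp only [id_eq] at h
    exact h.congr_deriv (by simp; ring)
  have hd1 : deriv f4 = fun s => (45*s^4 - 240*s^3 + 570*s^2 - 600*s + 225)/64 := by
    funext s; exact (hder s).deriv
  have hder2 : ∀ s : ℝ, HasDerivAt (fun s : ℝ => (45*s^4 - 240*s^3 + 570*s^2 - 600*s + 225)/64)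
      ((180*s^3 - 720*s^2 + 1140*s - 600)/64) s := by
    intro s
    have h4 : HasDerivAt (fun s : ℝ => s^4) (4 * s^3) s := by
      simpa using hasDerivAt_pow 4 s
    have h3 : HasDerivAt (fun s : ℝ => s^3) (3 * s^2) s := by
      simpa using hasDerivAt_pow 3 s
    have h2 : HasDerivAt (fun s : ℝ => s^2) (2 * s) s := by
      simpa using hasDerivAt_pow 2 s
    have := ((((h4.const_mul (45:ℝ)).sub (h3.const_mul (240:ℝ))).add
      (h2.const_mul (570:ℝ))).sub ((hasDerivAt_id s).const_mul (600:ℝ))).add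
      (hasDerivAt_const s (225:ℝ))
    have := this.div_const 64
    exact this.congr_deriv (by ring)
  refine ⟨by norm_num [f4], ?_, ?_, ?_⟩
  · rw [hd1]; norm_num
  · rw [hd1, funext fun s => (hder2 s).deriv]; norm_num
  · intro s₀ hs₀
    obtain ⟨h0, h73⟩ := hs₀
    set a : ℕ → ℝ := fun k => f4^[k] s₀ with ha
    have hsucc : ∀ k, a (k+1) = f4 (a k) := fun k => Function.iterate_succ_apply' f4 k s₀
    rcases lt_trichotomy s₀ 1 with hlt | heq | hgt
    · -- increasing case
      have hinv : ∀ k, a k ∈ Set.Ioo (0:ℝ) 1 := by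
        intro k; induction k with
        | zero => exact ⟨h0, hlt⟩
        | succ n ih =>
          obtain ⟨p, q⟩ := ih
          obtain ⟨r1, r2⟩ := f4_lt_one p q
          rw [hsucc]; exact ⟨lt_trans p r1, r2⟩
      have hmono : Monotone a := by
        apply monotone_nat_of_le_succ
        intro k
        rw [hsucc]
        exact le_of_lt (f4_lt_one (hinv k).1 (hinv k).2).1
      have hbdd : BddAbove (Set.range a) := ⟨1, by rintro x ⟨k, rfl⟩; exact le_of_lt (hinv k).2⟩
      have hL : Filter.Tendsto a Filter.atTop (nhds (⨆ k, a k)) :=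
        tendsto_atTop_ciSup hmono hbdd
      set L := ⨆ k, a k with hLdef
      have hfix : f4 L = L := by
        have h1 : Filter.Tendsto (fun k => a (k+1)) Filter.atTop (nhds L) :=
          hL.comp (Filter.tendsto_add_atTop_nat 1)
        have h2 : Filter.Tendsto (fun k => f4 (a k)) Filter.atTop (nhds (f4 L)) :=
          (f4_cont.tendsto L).comp hL
        have : (fun k => a (k+1)) = fun k => f4 (a k) := funext hsucc
        rw [this] at h1
        exact tendsto_nhds_unique h2 h1
      have hLle : L ≤ 1 := ciSup_le fun k => le_of_lt (hinv k).2
      have hLge : s₀ ≤ L := by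
        have := le_ciSup hbdd 0
        simpa [ha] using this
      have hL1 : L = 1 := by
        by_contra hne
        have hLlt : L < 1 := lt_of_le_of_ne hLle hne
        have := (f4_lt_one (lt_of_lt_of_le h0 hLge) hLlt).1
        rw [hfix] at this
        exact lt_irrefl L this
      rw [hL1] at hL
      exact hL
    · -- s₀ = 1
      subst heq
      have : ∀ k, a k = 1 := fun k => Function.iterate_fixed (by norm_num [f4]) k
      simpa [funext this] using tendsto_const_nhds
    · -- decreasing case
      have hinv : ∀ k, a k ∈ Set.Ioo (1:ℝ) (7/3) := by
        intro k; induction k with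
        | zero => exact ⟨hgt, h73⟩
        | succ n ih =>
          obtain ⟨p, q⟩ := ih
          obtain ⟨r1, r2⟩ := f4_gt_one p q
          rw [hsucc]; exact ⟨r1, lt_trans r2 q⟩
      have hmono : Antitone a := by
        apply antitone_nat_of_succ_le
        intro k
        rw [hsucc]
        exact le_of_lt (f4_gt_one (hinv k).1 (hinv k).2).2
      have hbdd : BddBelow (Set.range a) := ⟨1, by rintro x ⟨k, rfl⟩; exact le_of_lt (hinv k).1⟩
      have hL : Filter.Tendsto a Filter.atTop (nhds (⨅ k, a k)) :=
        tendsto_atTop_ciInf hmono hbdd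
      set L := ⨅ k, a k with hLdef
      have hfix : f4 L = L := by
        have h1 : Filter.Tendsto (fun k => a (k+1)) Filter.atTop (nhds L) :=
          hL.comp (Filter.tendsto_add_atTop_nat 1)
        have h2 : Filter.Tendsto (fun k => f4 (a k)) Filter.atTop (nhds (f4 L)) :=
          (f4_cont.tendsto L).comp hL
        have : (fun k => a (k+1)) = fun k => f4 (a k) := funext hsucc
        rw [this] at h1
        exact tendsto_nhds_unique h2 h1
      have hLge : 1 ≤ L := le_ciInf fun k => le_of_lt (hinv k).1
      have hLle : L ≤ s₀ := by
        have := ciInf_le hbdd 0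
        simpa [ha] using this
      have hL1 : L = 1 := by
        by_contra hne
        have hLgt : 1 < L := lt_of_le_of_ne hLge (Ne.symm hne)
        have := (f4_gt_one hLgt (lt_of_le_of_lt hLle h73)).2
        rw [hfix] at this
        exact lt_irrefl L this
      rw [hL1] at hL
      exact hL
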